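/- Let C ≥ 2, let n ≥ 2 and let k_1, …, k_n be positive integers such that either 2 ≤ k_n ≤ C, or k_n = 1 and k_{n-1} ≥ 2. Then for every j with 0 ≤ j ≤ n−1 such that the matrix M = A_{k_{n-j}} A_{k_{n-j+1}} ⋯ A_{k_n} has all entries ≥ 1 (M is a full matrix), one has M_{u,v} ≤ 4C · M_{u,v'} for all u, v, v' ∈ {1,2,3}; equivalently, the number of occurrences of the letter u in χ_{k_{n-j}}∘⋯∘χ_{k_n}(v) is at most 4C times the number of occurrences of u in χ_{k_{n-j}}∘⋯∘χ_{k_n}(v'). -/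

import Mathlib

open Filter Topology MeasureTheory

/-- The substitution `χ_k` on the alphabet `{1,2,3}`, coded as `Fin 3 = {0,1,2}`
(letter 1 ↦ 0, letter 2 ↦ 1, letter 3 ↦ 2):
`χ_k(1) = 2`, `χ_k(2) = 3 1^k`, `χ_k(3) = 3 1^(k-1)`. -/
def chiSub (k : ℕ) : Fin 3 → List (Fin 3) :=
  ![[1], 2 :: List.replicate k 0, 2 :: List.replicate (k - 1) 0]

/-- Extension of `χ_k` to finite words by concatenation. -/
def applyChi (k : ℕ) (w : List (Fin 3)) : List (Fin 3) := w.flatMap (chiSub k)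

/-- `compApply k n w = χ_{k 1} ∘ χ_{k 2} ∘ ⋯ ∘ χ_{k n} (w)`. -/
def compApply (k : ℕ → ℕ) : ℕ → List (Fin 3) → List (Fin 3)
  | 0, w => w
  | n + 1, w => compApply k n (applyChi (k (n + 1)) w)

/-- Condition (★): k_{2i} > 1` for infinitely many `i` and `k_{2i-1} > 1`
for infinitely many `i`. -/
def StarCond (k : ℕ → ℕ) : Prop :=
  (∀ N, ∃ i ≥ N, 1 < k (2 * i)) ∧ (∀ N, ∃ i ≥ N, 1 < k (2 * i - 1))

/-- `w` is a prefix of the infinite sequence `x`. -/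
def IsPrefixSeq (w : List (Fin 3)) (x : ℕ → Fin 3) : Prop :=
  w = List.ofFn fun i : Fin w.length => x i

/-- The left shift `σ`. -/
def shift (x : ℕ → Fin 3) : ℕ → Fin 3 := fun i => x (i + 1)

/-- The closure of the `σ`-orbit of `ρ`: the subshift `X`. -/
def orbitClosure (ρ : ℕ → Fin 3) : Set (ℕ → Fin 3) :=
  closure {y | ∃ n : ℕ, y = fun i => ρ (i + n)}

/-- The matrix `A_k`, with rows `(0,k,k-1)`, `(1,0,0)`, `(0,1,1)`: the `(i,j)` entry
is the number of occurrences of letter `i` in `χ_k(j)`. -/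
def AmatZ (k : ℕ) : Matrix (Fin 3) (Fin 3) ℤ :=
  !![0, (k : ℤ), (k : ℤ) - 1; 1, 0, 0; 0, 1, 1]

/-- `compRange k m len w = χ_{k m} ∘ χ_{k (m+1)} ∘ ⋯ ∘ χ_{k (m+len-1)} (w)`. -/
def compRange (k : ℕ → ℕ) (m : ℕ) : ℕ → List (Fin 3) → List (Fin 3)
  | 0, w => w
  | len + 1, w => compRange k m len (applyChi (k (m + len)) w)

/-! ### Auxiliary machinery -/

/-- Natural-number version of the incidence matrix `A_k`. -/
def Anat (k : ℕ) : Matrix (Fin 3) (Fin 3) ℕ :=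
  !![0, k, k - 1; 1, 0, 0; 0, 1, 1]

/-- Invariant satisfied by every row `(x,y,z)` of a (possibly empty) product of
matrices `Anat m` with all `m ≥ 1`. -/
def RowInv (x y z : ℕ) : Prop :=
  (x = 1 ∧ y = 0 ∧ z = 0) ∨ (x = 0 ∧ y = 0 ∧ z = 1) ∨
    (z ≤ y ∧ x ≤ y + z ∧ (y ≤ x + 2 * z ∨ y = 1))

lemma rowInv_step {x y z m : ℕ} (h : RowInv x y z) (hm : 1 ≤ m) :
    RowInv y (m * x + z) ((m - 1) * x + z) := by
  obtain ⟨m', rfl⟩ : ∃ m', m = m' + 1 := ⟨m - 1, by omega⟩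
  have e2 : (m' + 1) * x = m' * x + x := by ring
  have e3 : x ≤ m' * x + x := by omega
  simp only [Nat.add_sub_cancel, e2]
  unfold RowInv at h ⊢
  rcases h with ⟨rfl, rfl, rfl⟩ | ⟨rfl, rfl, rfl⟩ | ⟨h1, h2, h3 | h3⟩
  · simp only [Nat.mul_one, Nat.add_zero, Nat.mul_zero]
    rcases Nat.eq_or_lt_of_le hm with h | h
    · right; right; omega
    · right; right; omega
  · right; right; omega
  · rcases Nat.eq_zero_or_pos (m' * x + x + z) with h0 | h0
    · right; right; omega
    · right; right; omega
  · rcases Nat.eq_zero_or_pos (x + z) with h0 | h0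
    · have h5 : m' * x = 0 := by
        have : x = 0 := by omega
        simp [this]
      left; omega
    · right; right
      rcases Nat.eq_or_lt_of_le hm with h | h
      · refine ⟨by omega, by omega, Or.inl (by omega)⟩
      · have h4 : 2 * x ≤ m' * x + x := by nlinarith
        refine ⟨by omega, by omega, Or.inl (by omega)⟩

lemma rowInv_id (u : Fin 3) :
    RowInv ((1 : Matrix (Fin 3) (Fin 3) ℕ) u 0) ((1 : Matrix (Fin 3) (Fin 3) ℕ) u 1)
      ((1 : Matrix (Fin 3) (Fin 3) ℕ) u 2) := by
  fin_cases u <;> simp [RowInv, Matrix.one_apply]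

lemma mul_Anat_entries (X : Matrix (Fin 3) (Fin 3) ℕ) (m : ℕ) (u : Fin 3) :
    (X * Anat m) u 0 = X u 1 ∧ (X * Anat m) u 1 = m * X u 0 + X u 2 ∧
      (X * Anat m) u 2 = (m - 1) * X u 0 + X u 2 := by
  refine ⟨?_, ?_, ?_⟩ <;>
    simp [Matrix.mul_apply, Fin.sum_univ_three, Anat, Nat.mul_comm]

lemma rowInv_prod (l : List ℕ) (hl : ∀ m ∈ l, 1 ≤ m) (u : Fin 3) :
    RowInv ((l.map Anat).prod u 0) ((l.map Anat).prod u 1) ((l.map Anat).prod u 2) := by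
  induction l using List.reverseRecOn with
  | nil => simpa using rowInv_id u
  | append_singleton l m ih =>
    have hm : 1 ≤ m := hl m (by simp)
    have ih' := ih (fun a ha => hl a (by simp [ha]))
    rw [List.map_append, List.prod_append, List.map_singleton, List.prod_singleton]
    obtain ⟨e0, e1, e2⟩ := mul_Anat_entries ((l.map Anat).prod) m u
    rw [e0, e1, e2]
    exact rowInv_step ih' hm

lemma caseA (C b' p q r : ℕ) (hC : 2 ≤ C) (hb : b' + 2 ≤ C) (h : RowInv p q r)
    (h1 : 1 ≤ q) (h3 : 1 ≤ (b' + 1) * p + r) :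
    ∀ v v' : Fin 3,
      ![q, (b' + 2) * p + r, (b' + 1) * p + r] v ≤
        4 * C * ![q, (b' + 2) * p + r, (b' + 1) * p + r] v' := by
  rcases h with ⟨rfl, rfl, rfl⟩ | ⟨rfl, rfl, rfl⟩ | ⟨h4, h5, h6⟩
  · omega
  · omega
  · have e1 : (b' + 2) * p = (b' + 1) * p + p := by ring
    have e2 : p ≤ (b' + 1) * p := Nat.le_mul_of_pos_left p (by omega)
    have e3 : 8 * ((b' + 1) * p + r) ≤ 4 * C * ((b' + 1) * p + r) :=
      Nat.mul_le_mul_right _ (by omega)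
    have e4 : 8 * ((b' + 2) * p + r) ≤ 4 * C * ((b' + 2) * p + r) :=
      Nat.mul_le_mul_right _ (by omega)
    have e5 : 8 * q ≤ 4 * C * q := Nat.mul_le_mul_right _ (by omega)
    have F1 : q ≤ 4 * C * ((b' + 1) * p + r) := by
      rcases h6 with h6 | h6
      · omega
      · have := Nat.mul_le_mul_left (4 * C) h3
        omega
    have F2 : (b' + 2) * p + r ≤ 4 * C * q := by
      have t1 : (b' + 2) * p ≤ (b' + 2) * (q + r) := Nat.mul_le_mul_left _ h5
      have t2 : (b' + 2) * (q + r) = (b' + 2) * q + (b' + 2) * r := by ring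
      have t3 : (b' + 2) * r ≤ (b' + 2) * q := Nat.mul_le_mul_left _ h4
      have t4 : (b' + 2) * q ≤ C * q := Nat.mul_le_mul_right _ hb
      have t5 : q ≤ C * q := Nat.le_mul_of_pos_left q (by omega)
      have t6 : 4 * (C * q) = 4 * C * q := by ring
      omega
    intro v v'
    fin_cases v <;> fin_cases v' <;> simp <;> omega

lemma caseB (C a' x y z : ℕ) (hC : 2 ≤ C) (h : RowInv x y z)
    (h3 : 1 ≤ (a' + 1) * x + z) :
    ∀ v v' : Fin 3,
      ![(a' + 2) * x + z, (a' + 1) * x + y + z, (a' + 1) * x + z] v ≤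
        4 * C * ![(a' + 2) * x + z, (a' + 1) * x + y + z, (a' + 1) * x + z] v' := by
  have e1 : (a' + 2) * x = (a' + 1) * x + x := by ring
  have e2 : x ≤ (a' + 1) * x := Nat.le_mul_of_pos_left x (by omega)
  have hy : y ≤ 2 * ((a' + 1) * x + z) := by
    rcases h with ⟨rfl, rfl, rfl⟩ | ⟨rfl, rfl, rfl⟩ | ⟨h4, h5, h6 | h6⟩ <;> omega
  have e3 : ∀ t s : ℕ, t ≤ s → 3 * t ≤ 4 * C * s := by
    intro t s hts
    calc 3 * t ≤ (4 * C) * t := Nat.mul_le_mul_right _ (by omega)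
    _ ≤ 4 * C * s := Nat.mul_le_mul_left _ hts
  have g1 := e3 _ _ (le_refl ((a' + 1) * x + z))
  have g2 : 3 * ((a' + 1) * x + z) ≤ 4 * C * ((a' + 2) * x + z) := e3 _ _ (by omega)
  have g3 : 3 * ((a' + 1) * x + z) ≤ 4 * C * ((a' + 1) * x + y + z) := e3 _ _ (by omega)
  intro v v'
  fin_cases v <;> fin_cases v' <;> simp <;> omega

lemma chi_count (kk : ℕ) (v h : Fin 3) : (chiSub kk h).count v = Anat kk v h := by
  fin_cases h <;> fin_cases v <;>
    simp [chiSub, Anat, List.count_cons, List.count_replicate, List.count_singleton]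

lemma applyChi_count (kk : ℕ) (w : List (Fin 3)) (v : Fin 3) :
    (applyChi kk w).count v = ∑ t, Anat kk v t * w.count t := by
  induction w with
  | nil => simp [applyChi]
  | cons a w ih =>
    have : applyChi kk (a :: w) = chiSub kk a ++ applyChi kk w := rfl
    rw [this, List.count_append, ih, chi_count]
    have : ∀ t : Fin 3, ((a :: w).count t : ℕ) = w.count t + if a = t then 1 else 0 := by
      intro t; simp [List.count_cons]
    simp only [this, Nat.mul_add]
    rw [Finset.sum_add_distrib]
    have : ∑ t, Anat kk v t * (if a = t then 1 else 0) = Anat kk v a := by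
      rw [Finset.sum_eq_single a] <;> simp +contextual [eq_comm]
    omega

lemma compRange_count (k : ℕ → ℕ) (m : ℕ) :
    ∀ (len : ℕ) (w : List (Fin 3)) (u : Fin 3),
      (compRange k m len w).count u =
        ∑ t, (((List.range len).map fun i => Anat (k (m + i))).prod) u t * w.count t := by
  intro len
  induction len with
  | zero =>
    intro w u
    simp [compRange, Matrix.one_apply]
  | succ len ih =>
    intro w u
    show (compRange k m len (applyChi (k (m + len)) w)).count u = _
    rw [ih]
    simp only [applyChi_count]
    have key : ∀ t, (((List.range (len + 1)).map fun i => Anat (k (m + i))).prod) u t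
        = ∑ s, (((List.range len).map fun i => Anat (k (m + i))).prod) u s *
            Anat (k (m + len)) s t := by
      intro t
      rw [List.range_succ, List.map_append, List.prod_append]
      simp [Matrix.mul_apply]
    simp only [key, Finset.mul_sum, Finset.sum_mul, mul_assoc]
    exact Finset.sum_comm

lemma AmatZ_eq (m : ℕ) (hm : 1 ≤ m) :
    AmatZ m = (Nat.castRingHom ℤ).mapMatrix (Anat m) := by
  ext i j
  fin_cases i <;> fin_cases j <;>
    simp [AmatZ, Anat, Nat.cast_sub hm]

lemma prodZ (l : List ℕ) (hl : ∀ m ∈ l, 1 ≤ m) :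
    (l.map AmatZ).prod = (Nat.castRingHom ℤ).mapMatrix ((l.map Anat).prod) := by
  rw [map_list_prod, List.map_map]
  congr 1
  exact List.map_congr_left fun m hm => AmatZ_eq m (hl m hm)

/-- let `C ≥ 2`, `n ≥ 2` and `k_1, …, k_n` positive with `2 ≤ k_n ≤ C`,
or `k_n = 1` and `k_{n−1} ≥ 2`. For every `0 ≤ j ≤ n−1` such that the matrix
`M = A_{k_{n−j}} ⋯ A_{k_n}` has all entries `≥ 1`, one has `M_{u,v} ≤ 4C·M_{u,v'}`
for all `u,v,v'`; equivalently, the number of occurrences of any letter `u` in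
`χ_{k_{n−j}} ∘ ⋯ ∘ χ_{k_n}(v)` is at most `4C` times its number of occurrences in
`χ_{k_{n−j}} ∘ ⋯ ∘ χ_{k_n}(v')`. -/

theorem statement19 (C n : ℕ) (hC : 2 ≤ C) (hn : 2 ≤ n) (k : ℕ → ℕ)
    (hpos : ∀ i, 1 ≤ i → 1 ≤ k i)
    (hlast : (2 ≤ k n ∧ k n ≤ C) ∨ (k n = 1 ∧ 2 ≤ k (n - 1))) :
    ∀ j : ℕ, j ≤ n - 1 →
      (∀ u v : Fin 3,
        1 ≤ (((List.range (j + 1)).map fun i => AmatZ (k (n - j + i))).prod) u v) →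
      (∀ u v v' : Fin 3,
        (((List.range (j + 1)).map fun i => AmatZ (k (n - j + i))).prod) u v ≤
          4 * C * (((List.range (j + 1)).map fun i => AmatZ (k (n - j + i))).prod) u v') ∧
      (∀ u v v' : Fin 3,
        (compRange k (n - j) (j + 1) [v]).count u ≤
          4 * C * (compRange k (n - j) (j + 1) [v']).count u) := by
  intro j hj hfull
  have hnj : 1 ≤ n - j := by omega
  set f : ℕ → ℕ := fun i => k (n - j + i) with hf
  have hfpos : ∀ i, 1 ≤ f i := fun i => hpos _ (by omega)
  set lN : List ℕ := (List.range (j + 1)).map f with hlN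
  have hlpos : ∀ m ∈ lN, 1 ≤ m := by
    intro m hm
    obtain ⟨i, -, rfl⟩ := List.mem_map.1 hm
    exact hfpos i
  set N : Matrix (Fin 3) (Fin 3) ℕ := (lN.map Anat).prod with hN
  have hZ : ((List.range (j + 1)).map fun i => AmatZ (k (n - j + i))).prod
      = (Nat.castRingHom ℤ).mapMatrix N := by
    rw [hN, ← prodZ lN hlpos, hlN, List.map_map]
    rfl
  have hentry : ∀ u v : Fin 3,
      ((List.range (j + 1)).map fun i => AmatZ (k (n - j + i))).prod u v = (N u v : ℤ) := by
    intro u v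
    rw [hZ]
    simp [RingHom.mapMatrix_apply, Matrix.map_apply]
  have hfullN : ∀ u v, 1 ≤ N u v := by
    intro u v
    have := hfull u v
    rw [hentry] at this
    exact_mod_cast this
  -- the key natural-number inequality
  have key : ∀ u v v' : Fin 3, N u v ≤ 4 * C * N u v' := by
    rcases j with _ | j'
    · -- j = 0 : the single matrix is never full
      exfalso
      have h00 : N 0 0 = 0 := by
        rw [hN, hlN]
        simp [List.range_succ, Anat]
      have := hfullN 0 0
      omega
    · -- j = j' + 1
      have hsplit1 : lN = (List.range (j' + 1)).map f ++ [f (j' + 1)] := by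
        rw [hlN, List.range_succ, List.map_append]
        rfl
      set l1 : List ℕ := (List.range (j' + 1)).map f with hl1
      set X : Matrix (Fin 3) (Fin 3) ℕ := (l1.map Anat).prod with hX
      have hNX : N = X * Anat (f (j' + 1)) := by
        rw [hN, hsplit1]
        simp [List.map_append, List.prod_append]
        rfl
      have hl1pos : ∀ m ∈ l1, 1 ≤ m := by
        intro m hm
        obtain ⟨i, -, rfl⟩ := List.mem_map.1 hm
        exact hfpos i
      have hrowX : ∀ u, RowInv (X u 0) (X u 1) (X u 2) := fun u => rowInv_prod l1 hl1pos u
      have hfb : f (j' + 1) = k n := by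
        show k (n - (j' + 1) + (j' + 1)) = k n
        congr 1
        omega
      have hfa : f j' = k (n - 1) := by
        show k (n - (j' + 1) + j') = k (n - 1)
        congr 1
        omega
      intro u v v'
      rcases hlast with ⟨hb2, hbC⟩ | ⟨hb1, ha2⟩
      · -- case A : 2 ≤ k n ≤ C
        obtain ⟨b', hb0⟩ : ∃ b', k n = b' + 2 := ⟨k n - 2, by omega⟩
        have hb' : f (j' + 1) = b' + 2 := by rw [hfb, hb0]
        obtain ⟨E0, E1, E2⟩ := mul_Anat_entries X (f (j' + 1)) u
        rw [← hNX] at E0 E1 E2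
        rw [hb'] at E1 E2
        rw [show b' + 2 - 1 = b' + 1 from rfl] at E2
        have hNv : ∀ w : Fin 3,
            N u w = ![X u 1, (b' + 2) * X u 0 + X u 2, (b' + 1) * X u 0 + X u 2] w := by
          intro w
          fin_cases w <;> simpa
        have KEY := caseA C b' (X u 0) (X u 1) (X u 2) hC (by omega) (hrowX u)
          (by rw [← E0]; exact hfullN u 0) (by rw [← E2]; exact hfullN u 2)
        rw [hNv v, hNv v']
        exact KEY v v'
      · -- case B : k n = 1 and 2 ≤ k (n-1)
        have hsplit2 : l1 = (List.range j').map f ++ [f j'] := by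
          rw [hl1, List.range_succ, List.map_append]
          rfl
        set P0 : Matrix (Fin 3) (Fin 3) ℕ := (((List.range j').map f).map Anat).prod with hP0
        have hXP : X = P0 * Anat (f j') := by
          rw [hX, hsplit2, hP0]
          simp [List.map_append, List.prod_append, List.map_map]
        have hrowP : ∀ u, RowInv (P0 u 0) (P0 u 1) (P0 u 2) := by
          intro u
          refine rowInv_prod _ ?_ u
          intro m hm
          obtain ⟨i, -, rfl⟩ := List.mem_map.1 hm
          exact hfpos i
        obtain ⟨a', ha0⟩ : ∃ a', k (n - 1) = a' + 2 := ⟨k (n - 1) - 2, by omega⟩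
        have ha' : f j' = a' + 2 := by rw [hfa, ha0]
        obtain ⟨D0, D1, D2⟩ := mul_Anat_entries P0 (f j') u
        rw [← hXP] at D0 D1 D2
        rw [ha'] at D1 D2
        rw [show a' + 2 - 1 = a' + 1 from rfl] at D2
        obtain ⟨E0, E1, E2⟩ := mul_Anat_entries X (f (j' + 1)) u
        rw [← hNX] at E0 E1 E2
        rw [hfb, hb1] at E1 E2
        simp only [one_mul, Nat.sub_self, zero_mul, zero_add, Nat.zero_add, Nat.add_zero] at E1 E2
        have hNv : ∀ w : Fin 3,
            N u w = ![(a' + 2) * P0 u 0 + P0 u 2,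
              (a' + 1) * P0 u 0 + P0 u 1 + P0 u 2,
              (a' + 1) * P0 u 0 + P0 u 2] w := by
          intro w
          fin_cases w <;> simp <;> omega
        have KEY := caseB C a' (P0 u 0) (P0 u 1) (P0 u 2) hC (hrowP u)
          (by rw [← D2, ← E2]; exact hfullN u 2)
        rw [hNv v, hNv v']
        exact KEY v v'
  constructor
  · intro u v v'
    rw [hentry, hentry]
    exact_mod_cast key u v v'
  · intro u v v'
    have hcount : ∀ w : Fin 3, (compRange k (n - j) (j + 1) [w]).count u = N u w := by
      intro w
      rw [compRange_count]
      have hprodeq : ((List.range (j + 1)).map fun i => Anat (k (n - j + i))).prod = N := by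
        rw [hN, hlN, List.map_map]
        rfl
      rw [hprodeq]
      fin_cases w <;> simp [Fin.sum_univ_three]
    rw [hcount, hcount]
    exact key u v v'
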